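/- arXiv:1910.06533 — 2 statements merged into one kernel-verified Lean document; each statement's English description precedes it below -/
import Mathlib

section
/- Suppose the ruled strip f(t,v) = c(t) + v ξ(t) is developable. Then the mean curvature of f along the curve c, H_f(t) := (L(t) G(t) − 2 M(t) F(t) + N(t) E(t)) / (2 (E(t) G(t) − F(t)²)) computed from the first fundamental form coefficients E = 1, F = cos β, G = 1 and second fundamental form coefficients L = −κ sin α, M = 0, N = 0 at v = 0, satisfies H_f(t) = −κ(t) sin α(t) / (2 sin² β(t)) = −(κ(t)² sin² α(t) + (α'(t) + τ(t))²) / (2 κ(t) sin α(t)) for all t ∈ I; in particular H_f has no zeros on I. -/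
noncomputable section
open Real Set
open scoped ContDiff

local notation "⟪" x ", " y "⟫" => @inner ℝ _ _ x y

/-- Euclidean 3-space. -/
abbrev E3 := EuclideanSpace ℝ (Fin 3)

/-- The vector (cross) product of `ℝ³`. -/
def cross3 (u v : E3) : E3 :=
  (WithLp.equiv 2 (Fin 3 → ℝ)).symm
    ![u 1 * v 2 - u 2 * v 1, u 2 * v 0 - u 0 * v 2, u 0 * v 1 - u 1 * v 0]

@[simp] lemma cross3_apply0 (u v : E3) : cross3 u v 0 = u 1 * v 2 - u 2 * v 1 := rfl
@[simp] lemma cross3_apply1 (u v : E3) : cross3 u v 1 = u 2 * v 0 - u 0 * v 2 := rfl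
@[simp] lemma cross3_apply2 (u v : E3) : cross3 u v 2 = u 0 * v 1 - u 1 * v 0 := rfl

lemma inner3 (x y : E3) : ⟪x, y⟫ = x 0 * y 0 + x 1 * y 1 + x 2 * y 2 := by
  simp [PiLp.inner_apply, RCLike.inner_apply, Fin.sum_univ_three, mul_comm]

lemma my_cross3_self (u : E3) : cross3 u u = 0 := by
  ext i; fin_cases i <;> simp [cross3] <;> ring
lemma my_cross3_smul_right (r : ℝ) (u v : E3) : cross3 u (r • v) = r • cross3 u v := by
  ext i; fin_cases i <;> simp [cross3] <;> ring
lemma my_cross3_smul_left (r : ℝ) (u v : E3) : cross3 (r • u) v = r • cross3 u v := by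
  ext i; fin_cases i <;> simp [cross3] <;> ring
lemma my_cross3_add_right (u v w : E3) : cross3 u (v + w) = cross3 u v + cross3 u w := by
  ext i; fin_cases i <;> simp [cross3] <;> ring
lemma my_inner_cross_left (u v : E3) : ⟪cross3 u v, u⟫ = 0 := by
  simp [inner3, cross3, Fin.sum_univ_three]; ring
lemma my_inner_cross_right (u v : E3) : ⟪cross3 u v, v⟫ = 0 := by
  simp [inner3, cross3, Fin.sum_univ_three]; ring
lemma my_triple_skew (u v w : E3) : ⟪w, cross3 u v⟫ = -⟪v, cross3 u w⟫ := by
  simp [inner3, cross3, Fin.sum_univ_three]; ring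
lemma my_lagrange (u v w : E3) : ⟪cross3 u v, cross3 u w⟫ = ⟪u,u⟫*⟪v,w⟫ - ⟪u,w⟫*⟪v,u⟫ := by
  simp only [inner3]; simp [cross3]; ring
lemma my_cross_cross (u v : E3) : cross3 u (cross3 u v) = ⟪u,v⟫ • u - ⟪u,u⟫ • v := by
  simp only [inner3]; ext i; fin_cases i <;> simp [cross3] <;> ring

lemma hasDerivAt_comp_apply {u : ℝ → E3} {u' : E3} {t : ℝ} (i : Fin 3)
    (hu : HasDerivAt u u' t) : HasDerivAt (fun s => u s i) (u' i) t := by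
  exact (EuclideanSpace.proj (𝕜 := ℝ) i).hasFDerivAt.comp_hasDerivAt t hu

lemma cross3_rep (x y : E3) : cross3 x y =
    (x 1 * y 2 - x 2 * y 1) • (EuclideanSpace.single 0 (1:ℝ)) +
    (x 2 * y 0 - x 0 * y 2) • (EuclideanSpace.single 1 (1:ℝ)) +
    (x 0 * y 1 - x 1 * y 0) • (EuclideanSpace.single 2 (1:ℝ)) := by
  ext i; fin_cases i <;> simp [cross3, EuclideanSpace.single_apply] <;> ring

lemma hasDerivAt_cross3 {u v : ℝ → E3} {u' v' : E3} {t : ℝ}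
    (hu : HasDerivAt u u' t) (hv : HasDerivAt v v' t) :
    HasDerivAt (fun s => cross3 (u s) (v s)) (cross3 u' (v t) + cross3 (u t) v') t := by
  have hui := fun i => hasDerivAt_comp_apply i hu
  have hvi := fun i => hasDerivAt_comp_apply i hv
  have h : HasDerivAt (fun s => cross3 (u s) (v s))
      ((u' 1 * v t 2 + u t 1 * v' 2 - (u' 2 * v t 1 + u t 2 * v' 1)) • (EuclideanSpace.single 0 (1:ℝ)) +
       (u' 2 * v t 0 + u t 2 * v' 0 - (u' 0 * v t 2 + u t 0 * v' 2)) • (EuclideanSpace.single 1 (1:ℝ)) +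
       (u' 0 * v t 1 + u t 0 * v' 1 - (u' 1 * v t 0 + u t 1 * v' 0)) • (EuclideanSpace.single 2 (1:ℝ))) t := by
    simp only [cross3_rep]
    exact ((((((hui 1).mul (hvi 2)).sub ((hui 2).mul (hvi 1))).smul_const _).add
      ((((hui 2).mul (hvi 0)).sub ((hui 0).mul (hvi 2))).smul_const _)).add
      ((((hui 0).mul (hvi 1)).sub ((hui 1).mul (hvi 0))).smul_const _))
  convert h using 1
  ext i; fin_cases i <;> simp [EuclideanSpace.single_apply] <;> ring

lemma deriv_unique_on_Icc {a b t : ℝ} (hab : a < b) (ht : t ∈ Icc a b)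
    {f g : ℝ → ℝ} {f' g' : ℝ} (hf : HasDerivAt f f' t) (hg : HasDerivAt g g' t)
    (hfg : EqOn f g (Icc a b)) : f' = g' := by
  have h1 : HasDerivWithinAt f f' (Icc a b) t := hf.hasDerivWithinAt
  have h2 : HasDerivWithinAt f g' (Icc a b) t :=
    (hg.hasDerivWithinAt).congr (fun y hy => hfg hy) (hfg ht)
  exact (uniqueDiffOn_Icc hab t ht).eq_deriv _ h1 h2

lemma hone : (∞ : WithTop ℕ∞) ≠ 0 := by simp

set_option maxHeartbeats 1000000 in
/-- the mean curvature of a developable strip along the curve,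
computed via `H = (LG - 2MF + NE)/(2(EG - F²))` from `E = 1`, `F = cos β`, `G = 1`,
`L = -κ sin α`, `M = N = 0`, satisfies
`H = -κ sin α/(2 sin² β) = -(κ² sin² α + (α' + τ)²)/(2 κ sin α)`;
in particular `H` has no zeros on `I`. -/
theorem stmt4 (a b : ℝ) (hab : a < b)
    (c : ℝ → E3) (hc : ContDiff ℝ ∞ c) (hinj : InjOn c (Icc a b))
    (harc : ∀ t ∈ Icc a b, ‖deriv c t‖ = 1)
    (κ : ℝ → ℝ) (hκ : ∀ t, κ t = ‖deriv (deriv c) t‖)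
    (hκpos : ∀ t ∈ Icc a b, 0 < κ t)
    (e n bi : ℝ → E3) (τ : ℝ → ℝ)
    (he : ∀ t, e t = deriv c t)
    (hn : ∀ t, n t = (κ t)⁻¹ • deriv (deriv c) t)
    (hbi : ∀ t, bi t = cross3 (e t) (n t))
    (hτ : ∀ t, τ t = ⟪deriv n t, bi t⟫)
    (α β : ℝ → ℝ) (hα : ContDiff ℝ ∞ α) (hβ : ContDiff ℝ ∞ β)
    (hα1 : ∀ t ∈ Icc a b, 0 < |α t| ∧ |α t| < π / 2)
    (hβ1 : ∀ t ∈ Icc a b, 0 < β t ∧ β t < π)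
    (ξ : ℝ → E3)
    (hξ : ∀ t, ξ t = cos (β t) • e t +
      sin (β t) • (cos (α t) • n t + sin (α t) • bi t))
    (hdev : ∀ t ∈ Icc a b, ⟪cross3 (deriv c t) (ξ t), deriv ξ t⟫ = 0)
    (H : ℝ → ℝ)
    (hH : ∀ t, H t = ((-(κ t * sin (α t))) * 1 - 2 * 0 * cos (β t) + 0 * 1) /
      (2 * (1 * 1 - cos (β t) ^ 2))) :
    ∀ t ∈ Icc a b,
      H t = -(κ t * sin (α t)) / (2 * sin (β t) ^ 2) ∧
      H t = -((κ t) ^ 2 * sin (α t) ^ 2 + (deriv α t + τ t) ^ 2) /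
        (2 * κ t * sin (α t)) ∧
      H t ≠ 0 := by
  intro t ht
  -- basic nonvanishing facts
  have hκt : 0 < κ t := hκpos t ht
  have hsβ : 0 < sin (β t) := sin_pos_of_pos_of_lt_pi (hβ1 t ht).1 (hβ1 t ht).2
  have hsα : sin (α t) ≠ 0 := by
    have h1 := (hα1 t ht).1
    have h2 := (hα1 t ht).2
    have hπ : (2:ℝ) ≤ π := by nlinarith [pi_gt_three]
    rw [Ne, sin_eq_zero_iff_of_lt_of_lt (by cases abs_lt.mp h2; linarith)
      (by cases abs_lt.mp h2; linarith)]
    intro h0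
    rw [h0] at h1; simp at h1
  -- part 1
  have hpyβ := sin_sq_add_cos_sq (β t)
  have goal1 : H t = -(κ t * sin (α t)) / (2 * sin (β t) ^ 2) := by
    rw [hH t]
    have : 1 * 1 - cos (β t) ^ 2 = sin (β t) ^ 2 := by nlinarith
    rw [this]; ring_nf
  refine ⟨goal1, ?_, ?_⟩
  swap
  · rw [goal1]
    apply div_ne_zero
    · simp only [neg_ne_zero]; positivity
    · positivity
  -- smoothness bookkeeping
  have hc1 : ContDiff ℝ ∞ (deriv c) := (contDiff_infty_iff_deriv.mp hc).2
  have hc2 : ContDiff ℝ ∞ (deriv (deriv c)) := (contDiff_infty_iff_deriv.mp hc1).2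
  have hc1D : ∀ s, HasDerivAt (deriv c) (deriv (deriv c) s) s := fun s =>
    ((hc1.differentiable hone) s).hasDerivAt
  have hc2ne : deriv (deriv c) t ≠ 0 := by
    intro h0
    rw [hκ t, h0] at hκt; simp at hκt
  -- κ, n differentiable at t
  have hκfun : κ = fun s => ‖deriv (deriv c) s‖ := funext hκ
  have hκdiff : DifferentiableAt ℝ κ t := by
    rw [hκfun]
    exact DifferentiableAt.norm ℝ ((hc2.differentiable hone) t) hc2ne
  have hnfun : n = fun s => (κ s)⁻¹ • deriv (deriv c) s := funext hn
  have hndiff : DifferentiableAt ℝ n t := by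
    rw [hnfun]
    exact (hκdiff.inv hκt.ne').smul ((hc2.differentiable hone) t)
  set N' := deriv n t with hN'
  have hnD : HasDerivAt n N' t := hndiff.hasDerivAt
  -- e and its derivative
  have hc2t : deriv (deriv c) t = κ t • n t := by
    rw [hn t, smul_smul, mul_inv_cancel₀ hκt.ne', one_smul]
  have hefun : e = deriv c := funext he
  have heD : HasDerivAt e (κ t • n t) t := by
    rw [hefun, ← hc2t]; exact hc1D t
  -- bi and its derivative
  have hbifun : bi = fun s => cross3 (e s) (n s) := funext hbi
  have hbiD : HasDerivAt bi (cross3 (e t) N') t := by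
    rw [hbifun]
    have := hasDerivAt_cross3 heD hnD
    simpa [my_cross3_smul_left, my_cross3_self] using this
  -- first-order frame identities on the interval
  have step1 : ∀ s ∈ Icc a b, ⟪deriv c s, deriv c s⟫ = (1:ℝ) := by
    intro s hs
    rw [real_inner_self_eq_norm_sq, harc s hs]; norm_num
  have step2 : ∀ s ∈ Icc a b, ⟪deriv (deriv c) s, deriv c s⟫ = (0:ℝ) := by
    intro s hs
    have hD : HasDerivAt (fun r => ⟪deriv c r, deriv c r⟫)
        (⟪deriv c s, deriv (deriv c) s⟫ + ⟪deriv (deriv c) s, deriv c s⟫) s :=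
      HasDerivAt.inner ℝ (hc1D s) (hc1D s)
    have h0 : (⟪deriv c s, deriv (deriv c) s⟫ + ⟪deriv (deriv c) s, deriv c s⟫ : ℝ) = 0 :=
      deriv_unique_on_Icc hab hs hD (hasDerivAt_const s (1:ℝ)) step1
    rw [real_inner_comm] at h0
    linarith
  have step3 : ∀ s ∈ Icc a b, ⟪n s, deriv c s⟫ = (0:ℝ) := by
    intro s hs
    rw [hn s, real_inner_smul_left, step2 s hs, mul_zero]
  have step4 : ∀ s ∈ Icc a b, ⟪n s, n s⟫ = (1:ℝ) := by
    intro s hs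
    have : ‖deriv (deriv c) s‖ = κ s := (hκ s).symm
    rw [hn s, real_inner_smul_left, real_inner_smul_right, real_inner_self_eq_norm_sq, this]
    field_simp [(hκpos s hs).ne']
  -- values at t
  have i_ne : ⟪n t, e t⟫ = (0:ℝ) := by rw [he t]; exact step3 t ht
  have i_en : ⟪e t, n t⟫ = (0:ℝ) := by rw [real_inner_comm]; exact i_ne
  have i_nn : ⟪n t, n t⟫ = (1:ℝ) := step4 t ht
  have i_ee : ⟪e t, e t⟫ = (1:ℝ) := by rw [he t]; exact step1 t ht
  have i_bie : ⟪bi t, e t⟫ = (0:ℝ) := by rw [hbi t]; exact my_inner_cross_left _ _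
  have i_bin : ⟪bi t, n t⟫ = (0:ℝ) := by rw [hbi t]; exact my_inner_cross_right _ _
  have i_nbi : ⟪n t, bi t⟫ = (0:ℝ) := by rw [real_inner_comm]; exact i_bin
  have i_ebi : ⟪e t, bi t⟫ = (0:ℝ) := by rw [real_inner_comm]; exact i_bie
  have i_bibi : ⟪bi t, bi t⟫ = (1:ℝ) := by
    rw [hbi t, my_lagrange, i_nn, i_ee, i_en, i_ne]; ring
  -- derivatives of the frame inner products
  have p_ne : ⟪N', e t⟫ = -κ t := by
    have hD : HasDerivAt (fun s => ⟪n s, deriv c s⟫)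
        (⟪n t, deriv (deriv c) t⟫ + ⟪N', deriv c t⟫) t :=
      HasDerivAt.inner ℝ hnD (hc1D t)
    have h0 : (⟪n t, deriv (deriv c) t⟫ + ⟪N', deriv c t⟫ : ℝ) = 0 :=
      deriv_unique_on_Icc hab ht hD (hasDerivAt_const t (0:ℝ)) step3
    rw [hc2t, real_inner_smul_right, i_nn, ← he t] at h0
    linarith
  have q_nn : ⟪N', n t⟫ = (0:ℝ) := by
    have hD : HasDerivAt (fun s => ⟪n s, n s⟫) (⟪n t, N'⟫ + ⟪N', n t⟫) t :=
      HasDerivAt.inner ℝ hnD hnD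
    have h0 : (⟪n t, N'⟫ + ⟪N', n t⟫ : ℝ) = 0 :=
      deriv_unique_on_Icc hab ht hD (hasDerivAt_const t (1:ℝ)) step4
    rw [real_inner_comm] at h0
    linarith
  have i_biN : ⟪bi t, N'⟫ = τ t := by rw [real_inner_comm, hτ t]
  have i_nN : ⟪n t, N'⟫ = (0:ℝ) := by rw [real_inner_comm]; exact q_nn
  have i_nB : ⟪n t, cross3 (e t) N'⟫ = -τ t := by
    rw [my_triple_skew, ← hbi t, hτ t]
  have i_biB : ⟪bi t, cross3 (e t) N'⟫ = (0:ℝ) := by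
    rw [hbi t, my_lagrange]
    have h1 : ⟪n t, N'⟫ = (0:ℝ) := by rw [real_inner_comm]; exact q_nn
    rw [h1, i_ne]; ring
  -- derivative of ξ
  have hαD : HasDerivAt α (deriv α t) t := ((hα.differentiable hone) t).hasDerivAt
  have hβD : HasDerivAt β (deriv β t) t := ((hβ.differentiable hone) t).hasDerivAt
  set a' := deriv α t
  set b' := deriv β t
  have hwD : HasDerivAt (fun s => cos (α s) • n s + sin (α s) • bi s)
      ((cos (α t) • N' + (-sin (α t) * a') • n t) +
       (sin (α t) • cross3 (e t) N' + (cos (α t) * a') • bi t)) t :=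
    (hαD.cos.smul hnD).add (hαD.sin.smul hbiD)
  have hξfun : ξ = fun s => cos (β s) • e s +
      sin (β s) • (cos (α s) • n s + sin (α s) • bi s) := funext hξ
  have hξD : HasDerivAt ξ
      ((cos (β t) • (κ t • n t) + (-sin (β t) * b') • e t) +
       (sin (β t) • ((cos (α t) • N' + (-sin (α t) * a') • n t) +
         (sin (α t) • cross3 (e t) N' + (cos (α t) * a') • bi t)) +
        (cos (β t) * b') • (cos (α t) • n t + sin (α t) • bi t))) t := by
    rw [hξfun]
    exact (hβD.cos.smul heD).add (hβD.sin.smul hwD)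
  -- the developability identity
  have hdevt := hdev t ht
  rw [hξD.deriv] at hdevt
  have cb : cross3 (e t) (bi t) = -(n t) := by
    rw [hbi t, my_cross_cross, i_en, i_ee]
    module
  have cn : cross3 (e t) (n t) = bi t := (hbi t).symm
  have hcrossval : cross3 (deriv c t) (ξ t) =
      (sin (β t) * cos (α t)) • bi t + (-(sin (β t) * sin (α t))) • n t := by
    rw [← he t, hξ t, my_cross3_add_right, my_cross3_smul_right, my_cross3_self, smul_zero,
      zero_add, my_cross3_smul_right, my_cross3_add_right, my_cross3_smul_right,
      my_cross3_smul_right, cn, cb]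
    module
  rw [hcrossval] at hdevt
  -- expand the inner product
  simp only [inner_add_left, inner_add_right, real_inner_smul_left, real_inner_smul_right,
    i_bie, i_bin, i_bibi, i_nbi, i_ne, i_nn, i_biN, i_nN, i_nB, i_biB, q_nn] at hdevt
  -- hdevt should now be a polynomial identity; derive the key relation
  ring_nf at hdevt
  have key : sin (β t) * (sin (β t) * (a' + τ t) - κ t * sin (α t) * cos (β t)) = 0 := by
    linear_combination hdevt - sin (β t)^2*(a' + τ t) * sin_sq_add_cos_sq (α t)
  have key2 : sin (β t) * (a' + τ t) = κ t * sin (α t) * cos (β t) := by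
    rcases mul_eq_zero.mp key with h | h
    · exact absurd h hsβ.ne'
    · linarith
  -- part 2
  rw [goal1]
  have keysq : (sin (β t)*(a' + τ t))^2 = (κ t * sin (α t) * cos (β t))^2 := by rw [key2]
  rw [div_eq_div_iff (by positivity : (0:ℝ) < 2 * sin (β t) ^ 2).ne'
    (by exact mul_ne_zero (mul_ne_zero two_ne_zero hκt.ne') hsα)]
  linear_combination (2:ℝ) * keysq + 2*(κ t)^2*(sin (α t))^2 * hpyβ
end
end

section
/- (Theorem A / Proposition 2.1) Let μ : I → ℝ be a smooth function with max_{t∈I} |μ(t)| < min_{t∈I} κ(t) and μ > 0. Consider the set of all maps g : I × (−ε, ε) → ℝ³ of the following form: g(t,v) = c(s(t)) + v ξ(t), where s is either the identity map of I or the reversal s(t) = a + b − t, ξ(t) := cos β(t) ê(t) + sin β(t)(cos α(t) n̂(t) + sin α(t) b̂(t)) is built from the Frenet frame (ê, n̂, b̂) of the reparametrized curve c∘s, the smooth functions α, β satisfy 0 < |α(t)| < π/2 and 0 < β(t) < π, g is developable (det((c∘s)', ξ, ξ') = 0), and the geodesic curvature condition κ(s(t)) cos α(t) = μ(t) holds for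 all t ∈ I. Then this set contains at most four maps. -/
noncomputable section
open Real Set
open scoped ContDiff

local notation "⟪" x ", " y "⟫" => @inner ℝ _ _ x y

@[simp] lemma cross3_apply (u v : E3) (i : Fin 3) :
    cross3 u v i = ![u 1 * v 2 - u 2 * v 1, u 2 * v 0 - u 0 * v 2, u 0 * v 1 - u 1 * v 0] i := by
  simp [cross3, WithLp.equiv_symm_apply, PiLp.toLp_apply]

lemma inner_cross3_left (x y : E3) : ⟪cross3 x y, x⟫ = 0 := by
  simp [inner3, Fin.sum_univ_three]; ring

lemma inner_cross3_right (x y : E3) : ⟪cross3 x y, y⟫ = 0 := by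
  simp [inner3, Fin.sum_univ_three]; ring

lemma cross3_self (x : E3) : cross3 x x = 0 := by
  ext i; fin_cases i <;> simp [cross3_apply] <;> ring

lemma cross3_smul_add (x : E3) (r s : ℝ) (y z : E3) :
    cross3 x (r • y + s • z) = r • cross3 x y + s • cross3 x z := by
  ext i; fin_cases i <;>
    simp [cross3_apply, PiLp.add_apply, PiLp.smul_apply, smul_eq_mul] <;> ring

lemma cross3_smul_right (x : E3) (r : ℝ) (y : E3) :
    cross3 x (r • y) = r • cross3 x y := by
  ext i; fin_cases i <;>
    simp [cross3_apply, PiLp.smul_apply, smul_eq_mul] <;> ring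

lemma cross3_triple (x y : E3) :
    cross3 x (cross3 x y) = ⟪x, y⟫ • x - ⟪x, x⟫ • y := by
  rw [inner3, inner3]
  ext i; fin_cases i <;>
    simp [cross3_apply, inner3, Fin.sum_univ_three, PiLp.sub_apply, PiLp.smul_apply,
      smul_eq_mul] <;> ring

lemma HasDerivAt.e3_apply {f : ℝ → E3} {f' : E3} {t : ℝ} (h : HasDerivAt f f' t) (i : Fin 3) :
    HasDerivAt (fun t => f t i) (f' i) t := by
  have := (EuclideanSpace.proj (𝕜 := ℝ) i).hasFDerivAt.comp_hasDerivAt t h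
  exact this

lemma hasDerivAt_e3 {f : ℝ → E3} {f' : E3} {t : ℝ}
    (h : ∀ i, HasDerivAt (fun t => f t i) (f' i) t) : HasDerivAt f f' t := by
  have hF : HasDerivAt (fun t => (fun i => f t i : Fin 3 → ℝ)) (fun i => f' i) t :=
    hasDerivAt_pi.2 h
  exact ((EuclideanSpace.equiv (Fin 3) ℝ).symm.toContinuousLinearMap).hasFDerivAt.comp_hasDerivAt
    t hF

lemma HasDerivAt.cross3 {f g : ℝ → E3} {f' g' : E3} {t : ℝ}
    (hf : HasDerivAt f f' t) (hg : HasDerivAt g g' t) :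
    HasDerivAt (fun t => cross3 (f t) (g t)) (cross3 f' (g t) + cross3 (f t) g') t := by
  apply hasDerivAt_e3
  intro i
  have h0 := ((hf.e3_apply 1).mul (hg.e3_apply 2)).sub ((hf.e3_apply 2).mul (hg.e3_apply 1))
  have h1 := ((hf.e3_apply 2).mul (hg.e3_apply 0)).sub ((hf.e3_apply 0).mul (hg.e3_apply 2))
  have h2 := ((hf.e3_apply 0).mul (hg.e3_apply 1)).sub ((hf.e3_apply 1).mul (hg.e3_apply 0))
  fin_cases i
  · refine HasDerivAt.congr_deriv (h0.congr_of_eventuallyEq ?_) ?_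
    · filter_upwards with t; simp [_root_.cross3, WithLp.equiv_symm_apply, PiLp.toLp_apply]
    · simp [_root_.cross3, WithLp.equiv_symm_apply, PiLp.toLp_apply, PiLp.add_apply]; ring
  · refine HasDerivAt.congr_deriv (h1.congr_of_eventuallyEq ?_) ?_
    · filter_upwards with t; simp [_root_.cross3, WithLp.equiv_symm_apply, PiLp.toLp_apply]
    · simp [_root_.cross3, WithLp.equiv_symm_apply, PiLp.toLp_apply, PiLp.add_apply]; ring
  · refine HasDerivAt.congr_deriv (h2.congr_of_eventuallyEq ?_) ?_
    · filter_upwards with t; simp [_root_.cross3, WithLp.equiv_symm_apply, PiLp.toLp_apply]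
    · simp [_root_.cross3, WithLp.equiv_symm_apply, PiLp.toLp_apply, PiLp.add_apply]; ring

lemma sign_lemma (a b : ℝ) (α : ℝ → ℝ) (hα : ContDiff ℝ ∞ α)
    (hne : ∀ t ∈ Icc a b, sin (α t) ≠ 0) (t : ℝ) (ht : t ∈ Icc a b) :
    0 < sin (α a) ↔ 0 < sin (α t) := by
  have ha : a ∈ Icc a b := ⟨le_refl _, le_trans ht.1 ht.2⟩
  have hcont : ContinuousOn (fun x => sin (α x)) (Icc a t) :=
    (Real.continuous_sin.comp hα.continuous).continuousOn
  have hsub : Icc a t ⊆ Icc a b := Icc_subset_Icc le_rfl ht.2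
  constructor
  · intro h
    rcases lt_trichotomy (sin (α t)) 0 with h'|h'|h'
    · exfalso
      obtain ⟨x, hx, hx0⟩ := intermediate_value_Icc' ht.1 hcont
        (⟨le_of_lt h', le_of_lt h⟩ : (0:ℝ) ∈ Icc (sin (α t)) (sin (α a)))
      exact hne x (hsub hx) hx0
    · exact absurd h' (hne t ht)
    · exact h'
  · intro h
    rcases lt_trichotomy (sin (α a)) 0 with h'|h'|h'
    · exfalso
      obtain ⟨x, hx, hx0⟩ := intermediate_value_Icc ht.1 hcont
        (⟨le_of_lt h', le_of_lt h⟩ : (0:ℝ) ∈ Icc (sin (α a)) (sin (α t)))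
      exact hne x (hsub hx) hx0
    · exact absurd h' (hne a ha)
    · exact h'

/-- the normal-direction auxiliary field -/
def wfun (d : ℝ → E3) (α : ℝ → ℝ) : ℝ → E3 := fun t =>
  cos (α t) • (‖deriv (deriv d) t‖⁻¹ • deriv (deriv d) t) +
  sin (α t) • cross3 (deriv d t) (‖deriv (deriv d) t‖⁻¹ • deriv (deriv d) t)

lemma inner_cross_w (e e' : E3) (κ r s : ℝ) (hκ : ‖e'‖ = κ) (hκ0 : 0 < κ)
    (he : ⟪e, e⟫ = 1) (hee' : ⟪e, e'⟫ = 0) :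
    ⟪cross3 e (r • (κ⁻¹ • e') + s • cross3 e (κ⁻¹ • e')), e'⟫ = -(κ * s) := by
  have hn : κ • (κ⁻¹ • e') = e' := smul_inv_smul₀ hκ0.ne' e'
  rw [cross3_smul_add]
  rw [inner_add_left, real_inner_smul_left, real_inner_smul_left]
  have h1 : ⟪cross3 e (κ⁻¹ • e'), e'⟫ = 0 := by
    rw [cross3_smul_right, real_inner_smul_left]
    have : ⟪cross3 e e', e'⟫ = 0 := inner_cross3_right e e'
    rw [this, mul_zero]
  have h2 : ⟪cross3 e (cross3 e (κ⁻¹ • e')), e'⟫ = -κ := by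
    rw [cross3_triple]
    have hen : ⟪e, κ⁻¹ • e'⟫ = 0 := by rw [real_inner_smul_right, hee', mul_zero]
    rw [hen, he, zero_smul, one_smul, zero_sub, inner_neg_left, real_inner_smul_left]
    have : ⟪e', e'⟫ = κ * κ := by
      rw [real_inner_self_eq_norm_mul_norm, hκ]
    rw [this]
    field_simp
  rw [h1, h2]; ring

lemma strip_unique (a b : ℝ) (hab : a < b) (d : ℝ → E3) (hd : ContDiff ℝ ∞ d)
    (harc : ∀ t ∈ Icc a b, ‖deriv d t‖ = 1)
    (hκ : ∀ t ∈ Icc a b, 0 < ‖deriv (deriv d) t‖)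
    (μ : ℝ → ℝ)
    (α₁ β₁ : ℝ → ℝ) (ξ₁ : ℝ → E3) (α₂ β₂ : ℝ → ℝ) (ξ₂ : ℝ → E3)
    (hα₁ : ContDiff ℝ ∞ α₁) (hβ₁ : ContDiff ℝ ∞ β₁)
    (hα₂ : ContDiff ℝ ∞ α₂) (hβ₂ : ContDiff ℝ ∞ β₂)
    (hαr₁ : ∀ t ∈ Icc a b, 0 < |α₁ t| ∧ |α₁ t| < π / 2)
    (hαr₂ : ∀ t ∈ Icc a b, 0 < |α₂ t| ∧ |α₂ t| < π / 2)
    (hβr₁ : ∀ t ∈ Icc a b, 0 < β₁ t ∧ β₁ t < π)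
    (hβr₂ : ∀ t ∈ Icc a b, 0 < β₂ t ∧ β₂ t < π)
    (hξ₁ : ∀ t, ξ₁ t = cos (β₁ t) • deriv d t + sin (β₁ t) • wfun d α₁ t)
    (hξ₂ : ∀ t, ξ₂ t = cos (β₂ t) • deriv d t + sin (β₂ t) • wfun d α₂ t)
    (hdev₁ : ∀ t ∈ Icc a b, ⟪cross3 (deriv d t) (ξ₁ t), deriv ξ₁ t⟫ = 0)
    (hdev₂ : ∀ t ∈ Icc a b, ⟪cross3 (deriv d t) (ξ₂ t), deriv ξ₂ t⟫ = 0)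
    (hgeo₁ : ∀ t ∈ Icc a b, ‖deriv (deriv d) t‖ * cos (α₁ t) = μ t)
    (hgeo₂ : ∀ t ∈ Icc a b, ‖deriv (deriv d) t‖ * cos (α₂ t) = μ t)
    (hsgn : 0 < sin (α₁ a) ↔ 0 < sin (α₂ a)) :
    ∀ t ∈ Icc a b, ξ₁ t = ξ₂ t := by
  have hdd : ContDiff ℝ ∞ (deriv d) := (contDiff_infty_iff_deriv.mp hd).2
  have hde' : Differentiable ℝ (deriv d) := hdd.differentiable (by simp)
  have hdd2 : ContDiff ℝ ∞ (deriv (deriv d)) := (contDiff_infty_iff_deriv.mp hdd).2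
  have hde'' : Differentiable ℝ (deriv (deriv d)) := hdd2.differentiable (by simp)
  -- sin of the α's is nonzero on I
  have hsne : ∀ (α : ℝ → ℝ), (∀ t ∈ Icc a b, 0 < |α t| ∧ |α t| < π / 2) →
      ∀ t ∈ Icc a b, sin (α t) ≠ 0 := by
    intro α hr t ht h0
    obtain ⟨h1, h2⟩ := hr t ht
    obtain ⟨h3, h4⟩ := abs_lt.mp h2
    rw [sin_eq_zero_iff_of_lt_of_lt (by linarith [pi_pos]) (by linarith [pi_pos])] at h0
    rw [h0] at h1; simp at h1
  have hsne₁ := hsne α₁ hαr₁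
  have hsne₂ := hsne α₂ hαr₂
  -- the cosines agree
  have hcos_eq : ∀ t ∈ Icc a b, cos (α₁ t) = cos (α₂ t) := by
    intro t ht
    have h1 := hgeo₁ t ht
    have h2 := hgeo₂ t ht
    exact mul_left_cancel₀ (hκ t ht).ne' (h1.trans h2.symm)
  -- the sines agree
  have hsin_eq : ∀ t ∈ Icc a b, sin (α₁ t) = sin (α₂ t) := by
    intro t ht
    have hc := hcos_eq t ht
    have h1 : sin (α₁ t) ^ 2 = sin (α₂ t) ^ 2 := by
      have e1 := sin_sq_add_cos_sq (α₁ t)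
      have e2 := sin_sq_add_cos_sq (α₂ t)
      rw [hc] at e1; linarith
    have k1 := sign_lemma a b α₁ hα₁ hsne₁ t ht
    have k2 := sign_lemma a b α₂ hα₂ hsne₂ t ht
    have ha : a ∈ Icc a b := ⟨le_rfl, hab.le⟩
    by_cases h : 0 < sin (α₁ a)
    · have p1 : 0 < sin (α₁ t) := k1.mp h
      have p2 : 0 < sin (α₂ t) := k2.mp (hsgn.mp h)
      nlinarith
    · have p1 : sin (α₁ t) < 0 := (not_lt.mp (k1.not.mp h)).lt_of_ne (hsne₁ t ht)
      have p2 : sin (α₂ t) < 0 :=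
        (not_lt.mp (k2.not.mp (hsgn.not.mp h))).lt_of_ne (hsne₂ t ht)
      nlinarith
  
  -- the auxiliary normal fields agree on I
  have hw_eq : ∀ t ∈ Icc a b, wfun d α₁ t = wfun d α₂ t := by
    intro t ht
    simp only [wfun]
    rw [hcos_eq t ht, hsin_eq t ht]
  have hee : ∀ t ∈ Icc a b, ⟪deriv d t, deriv d t⟫ = (1:ℝ) := by
    intro t ht
    rw [real_inner_self_eq_norm_mul_norm, harc t ht]; norm_num
  -- the ruling angles agree on the interior
  have hβeq : ∀ t ∈ Ioo a b, β₁ t = β₂ t := by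
    intro t ht
    have ht' : t ∈ Icc a b := Ioo_subset_Icc_self ht
    have hmem : Icc a b ∈ nhds t := Icc_mem_nhds ht.1 ht.2
    have he : HasDerivAt (deriv d) (deriv (deriv d) t) t := (hde' t).hasDerivAt
    have hee' : ⟪deriv d t, deriv (deriv d) t⟫ = 0 := by
      have hF : HasDerivAt (fun x => ⟪deriv d x, deriv d x⟫)
          (⟪deriv d t, deriv (deriv d) t⟫ + ⟪deriv (deriv d) t, deriv d t⟫) t :=
        HasDerivAt.inner ℝ he he
      have hconst : (fun x => ⟪deriv d x, deriv d x⟫) =ᶠ[nhds t] fun _ => (1:ℝ) :=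
        Filter.eventually_of_mem hmem (fun x hx => hee x hx)
      have h0 : deriv (fun x => ⟪deriv d x, deriv d x⟫) t = 0 := by
        rw [hconst.deriv_eq]; exact deriv_const t 1
      rw [hF.deriv, real_inner_comm (deriv (deriv d) t) (deriv d t)] at h0
      rw [real_inner_comm]
      linarith
    have hvec0 : deriv (deriv d) t ≠ 0 := by
      intro h0; have := hκ t ht'; rw [h0] at this; simp at this
    have hnorm : DifferentiableAt ℝ (fun x => ‖deriv (deriv d) x‖) t :=
      (hde'' t).norm ℝ hvec0
    have hinv : DifferentiableAt ℝ (fun x => ‖deriv (deriv d) x‖⁻¹) t :=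
      hnorm.inv (hκ t ht').ne'
    have hn : DifferentiableAt ℝ (fun x => ‖deriv (deriv d) x‖⁻¹ • deriv (deriv d) x) t :=
      hinv.smul (hde'' t)
    have hbvec : DifferentiableAt ℝ
        (fun x => cross3 (deriv d x) (‖deriv (deriv d) x‖⁻¹ • deriv (deriv d) x)) t :=
      (he.cross3 hn.hasDerivAt).differentiableAt
    have hαd₁ : DifferentiableAt ℝ α₁ t := (hα₁.differentiable (by simp)) t
    have hαd₂ : DifferentiableAt ℝ α₂ t := (hα₂.differentiable (by simp)) t
    have hw₁ : DifferentiableAt ℝ (wfun d α₁) t :=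
      (hαd₁.cos.smul hn).add (hαd₁.sin.smul hbvec)
    have hw₂ : DifferentiableAt ℝ (wfun d α₂) t :=
      (hαd₂.cos.smul hn).add (hαd₂.sin.smul hbvec)
    -- developability in scalar form
    have main : ∀ (αf βf : ℝ → ℝ) (ξ : ℝ → E3), ContDiff ℝ ∞ βf →
        DifferentiableAt ℝ (wfun d αf) t →
        (∀ x, ξ x = cos (βf x) • deriv d x + sin (βf x) • wfun d αf x) →
        (⟪cross3 (deriv d t) (ξ t), deriv ξ t⟫ = 0) →
        0 < sin (βf t) →
        cos (βf t) * ⟪cross3 (deriv d t) (wfun d αf t), deriv (deriv d) t⟫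
          + sin (βf t) * ⟪cross3 (deriv d t) (wfun d αf t), deriv (wfun d αf) t⟫ = 0 := by
      intro αf βf ξ hβf hwd hξf hdev hsβ
      have hξfun : ξ = fun x => cos (βf x) • deriv d x + sin (βf x) • wfun d αf x := funext hξf
      have hβd : HasDerivAt βf (deriv βf t) t :=
        ((hβf.differentiable (by simp)) t).hasDerivAt
      have hV : HasDerivAt ξ
          ((cos (βf t) • deriv (deriv d) t + (-sin (βf t) * deriv βf t) • deriv d t)
            + (sin (βf t) • deriv (wfun d αf) t
                + (cos (βf t) * deriv βf t) • wfun d αf t)) t := by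
        rw [hξfun]
        exact (hβd.cos.smul he).add (hβd.sin.smul hwd.hasDerivAt)
      rw [hξf t, hV.deriv] at hdev
      rw [cross3_smul_add, cross3_self, smul_zero, zero_add] at hdev
      simp only [inner_add_right, real_inner_smul_left, real_inner_smul_right,
        inner_cross3_left, inner_cross3_right, mul_zero, add_zero, zero_add] at hdev
      have h2 : sin (βf t) *
          (cos (βf t) * ⟪cross3 (deriv d t) (wfun d αf t), deriv (deriv d) t⟫
            + sin (βf t) * ⟪cross3 (deriv d t) (wfun d αf t), deriv (wfun d αf) t⟫) = 0 := by
        linear_combination hdev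
      rcases mul_eq_zero.mp h2 with h | h
      · exact absurd h hsβ.ne'
      · exact h
    have eq₁ := main α₁ β₁ ξ₁ hβ₁ hw₁ hξ₁ (hdev₁ t ht')
      (sin_pos_of_pos_of_lt_pi (hβr₁ t ht').1 (hβr₁ t ht').2)
    have eq₂ := main α₂ β₂ ξ₂ hβ₂ hw₂ hξ₂ (hdev₂ t ht')
      (sin_pos_of_pos_of_lt_pi (hβr₂ t ht').1 (hβr₂ t ht').2)
    have hwt : wfun d α₂ t = wfun d α₁ t := (hw_eq t ht').symm
    have hwderiv : deriv (wfun d α₂) t = deriv (wfun d α₁) t :=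
      Filter.EventuallyEq.deriv_eq
        (Filter.eventually_of_mem hmem (fun x hx => (hw_eq x hx).symm))
    rw [hwt, hwderiv] at eq₂
    -- the ⟪u, e'⟫ coefficient is nonzero
    have hA : ⟪cross3 (deriv d t) (wfun d α₁ t), deriv (deriv d) t⟫
        = -(‖deriv (deriv d) t‖ * sin (α₁ t)) := by
      simp only [wfun]
      exact inner_cross_w (deriv d t) (deriv (deriv d) t) _ _ _ rfl (hκ t ht')
        (hee t ht') hee'
    have hA0 : ⟪cross3 (deriv d t) (wfun d α₁ t), deriv (deriv d) t⟫ ≠ 0 := by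
      rw [hA]
      simp only [neg_ne_zero]
      exact mul_ne_zero (hκ t ht').ne' (hsne₁ t ht')
    have hkey : sin (β₁ t) * cos (β₂ t) - cos (β₁ t) * sin (β₂ t) = 0 := by
      have h := mul_eq_zero.mp (show
          ⟪cross3 (deriv d t) (wfun d α₁ t), deriv (deriv d) t⟫ *
            (sin (β₁ t) * cos (β₂ t) - cos (β₁ t) * sin (β₂ t)) = 0 by
        linear_combination sin (β₁ t) * eq₂ - sin (β₂ t) * eq₁)
      tauto
    have hr1 := hβr₁ t ht'
    have hr2 := hβr₂ t ht'
    have h5 : sin (β₁ t - β₂ t) = 0 := by rw [sin_sub]; linarith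
    have := (sin_eq_zero_iff_of_lt_of_lt (by linarith) (by linarith)).mp h5
    linarith
  -- extend to the closed interval by continuity
  have hβIcc : ∀ t ∈ Icc a b, β₁ t = β₂ t := by
    have hcl : EqOn β₁ β₂ (closure (Ioo a b)) :=
      Set.EqOn.closure hβeq hβ₁.continuous hβ₂.continuous
    rw [closure_Ioo hab.ne] at hcl
    exact fun t ht => hcl ht
  intro t ht
  rw [hξ₁ t, hξ₂ t, hβIcc t ht, hw_eq t ht]

lemma rev_deriv (c : ℝ → E3) (A : ℝ) :
    deriv (c ∘ fun t => A - t) = fun t => -deriv c (A - t) := by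
  funext t
  exact deriv_comp_const_sub (f := c) (a := A) (x := t)

lemma rev_deriv2 (c : ℝ → E3) (A : ℝ) :
    deriv (deriv (c ∘ fun t => A - t)) = fun t => deriv (deriv c) (A - t) := by
  rw [rev_deriv]
  funext t
  rw [show (fun t => -deriv c (A - t)) = fun t => -((fun x => deriv c (A - x)) t) from rfl]
  rw [deriv.fun_neg, deriv_comp_const_sub, neg_neg]

def Wpred (a b ε : ℝ) (c : ℝ → E3) (μ : ℝ → ℝ) (s : ℝ → ℝ) (k : Bool)
    (g : (Icc a b ×ˢ Ioo (-ε) ε : Set (ℝ × ℝ)) → E3) : Prop :=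
  ∃ (α β : ℝ → ℝ) (ξ : ℝ → E3),
    ContDiff ℝ ∞ α ∧ ContDiff ℝ ∞ β ∧
    (∀ t ∈ Icc a b, 0 < |α t| ∧ |α t| < π / 2) ∧
    (∀ t ∈ Icc a b, 0 < β t ∧ β t < π) ∧
    (∀ t, ξ t = cos (β t) • deriv (c ∘ s) t + sin (β t) • wfun (c ∘ s) α t) ∧
    (∀ t ∈ Icc a b, ⟪cross3 (deriv (c ∘ s) t) (ξ t), deriv ξ t⟫ = 0) ∧
    (∀ t ∈ Icc a b, ‖deriv (deriv (c ∘ s)) t‖ * cos (α t) = μ t) ∧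
    (∀ p : (Icc a b ×ˢ Ioo (-ε) ε : Set (ℝ × ℝ)),
      g p = c (s p.1.1) + p.1.2 • ξ p.1.1) ∧
    (0 < sin (α a) ↔ k = true)

lemma Wpred_unique (a b : ℝ) (hab : a < b) (c : ℝ → E3) (hc : ContDiff ℝ ∞ c)
    (harc : ∀ t ∈ Icc a b, ‖deriv c t‖ = 1)
    (hκpos : ∀ t ∈ Icc a b, 0 < ‖deriv (deriv c) t‖)
    (μ : ℝ → ℝ) (ε : ℝ)
    (s : ℝ → ℝ) (hs : s = id ∨ s = fun t => a + b - t) (k : Bool)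
    (g g' : (Icc a b ×ˢ Ioo (-ε) ε : Set (ℝ × ℝ)) → E3)
    (hg : Wpred a b ε c μ s k g) (hg' : Wpred a b ε c μ s k g') : g = g' := by
  have hmem : ∀ t ∈ Icc a b, s t ∈ Icc a b := by
    rcases hs with hs | hs <;> subst hs <;> intro t ht
    · exact ht
    · exact ⟨by simp; linarith [ht.1, ht.2], by simp; linarith [ht.1, ht.2]⟩
  have hd : ContDiff ℝ ∞ (c ∘ s) := by
    rcases hs with hs | hs <;> subst hs
    · simpa [Function.comp_id] using hc
    · exact hc.comp (contDiff_const.sub contDiff_id)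
  have harc' : ∀ t ∈ Icc a b, ‖deriv (c ∘ s) t‖ = 1 := by
    rcases hs with hs | hs <;> subst hs <;> intro t ht
    · rw [Function.comp_id]; exact harc t ht
    · rw [rev_deriv, norm_neg]
      exact harc _ (hmem t ht)
  have hκ' : ∀ t ∈ Icc a b, 0 < ‖deriv (deriv (c ∘ s)) t‖ := by
    rcases hs with hs | hs <;> subst hs <;> intro t ht
    · rw [Function.comp_id]; exact hκpos t ht
    · rw [rev_deriv2]
      exact hκpos _ (hmem t ht)
  obtain ⟨α₁, β₁, ξ₁, hα₁, hβ₁, hαr₁, hβr₁, hξ₁, hdev₁, hgeo₁, hg₁, hk₁⟩ := hg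
  obtain ⟨α₂, β₂, ξ₂, hα₂, hβ₂, hαr₂, hβr₂, hξ₂, hdev₂, hgeo₂, hg₂, hk₂⟩ := hg'
  have hξeq : ∀ t ∈ Icc a b, ξ₁ t = ξ₂ t :=
    strip_unique a b hab (c ∘ s) hd harc' hκ' μ α₁ β₁ ξ₁ α₂ β₂ ξ₂
      hα₁ hβ₁ hα₂ hβ₂ hαr₁ hαr₂ hβr₁ hβr₂ hξ₁ hξ₂ hdev₁ hdev₂ hgeo₁ hgeo₂
      (hk₁.trans hk₂.symm)
  funext p
  have hp := p.2
  rw [Set.mem_prod] at hp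
  rw [hg₁ p, hg₂ p, hξeq p.1.1 hp.1]

/-- Theorem A / Proposition 2.1: among all developable strips
`g(t,v) = c(s(t)) + v ξ(t)` (with `s` the identity or the reversal `t ↦ a+b-t`,
`ξ` built from the Frenet frame of `c ∘ s` via angular functions `α, β`,
satisfying the developability condition and the geodesic curvature condition
`κ(s(t)) cos α(t) = μ(t)`), regarded as maps on `I × (-ε, ε)`, there are at
most four. -/
theorem stmt9 (a b : ℝ) (hab : a < b)
    (c : ℝ → E3) (hc : ContDiff ℝ ∞ c) (hinj : InjOn c (Icc a b))
    (harc : ∀ t ∈ Icc a b, ‖deriv c t‖ = 1)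
    (hκpos : ∀ t ∈ Icc a b, 0 < ‖deriv (deriv c) t‖)
    (μ : ℝ → ℝ) (hμ : ContDiff ℝ ∞ μ)
    (hμpos : ∀ t ∈ Icc a b, 0 < μ t)
    (hμκ : ∀ t ∈ Icc a b, ∀ t' ∈ Icc a b, |μ t| < ‖deriv (deriv c) t'‖)
    (ε : ℝ) (hε : 0 < ε) :
    ∃ g₁ g₂ g₃ g₄ : (Icc a b ×ˢ Ioo (-ε) ε : Set (ℝ × ℝ)) → E3,
      ∀ g : (Icc a b ×ˢ Ioo (-ε) ε : Set (ℝ × ℝ)) → E3,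
        (∃ s : ℝ → ℝ, (s = id ∨ s = fun t => a + b - t) ∧
          ∃ (α β : ℝ → ℝ) (ξ : ℝ → E3),
            ContDiff ℝ ∞ α ∧ ContDiff ℝ ∞ β ∧
            (∀ t ∈ Icc a b, 0 < |α t| ∧ |α t| < π / 2) ∧
            (∀ t ∈ Icc a b, 0 < β t ∧ β t < π) ∧
            -- `ξ` is built from the Frenet frame `(ê, n̂, b̂)` of `c ∘ s`:
            (∀ t, ξ t = cos (β t) • deriv (c ∘ s) t +
              sin (β t) • (cos (α t) •
                  (‖deriv (deriv (c ∘ s)) t‖⁻¹ • deriv (deriv (c ∘ s)) t) +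
                sin (α t) • cross3 (deriv (c ∘ s) t)
                  (‖deriv (deriv (c ∘ s)) t‖⁻¹ • deriv (deriv (c ∘ s)) t))) ∧
            -- `g` is developable:
            (∀ t ∈ Icc a b, ⟪cross3 (deriv (c ∘ s) t) (ξ t), deriv ξ t⟫ = 0) ∧
            -- geodesic curvature condition `κ(s(t)) cos α(t) = μ(t)`:
            (∀ t ∈ Icc a b, ‖deriv (deriv (c ∘ s)) t‖ * cos (α t) = μ t) ∧
            (∀ p : (Icc a b ×ˢ Ioo (-ε) ε : Set (ℝ × ℝ)),
              g p = c (s p.1.1) + p.1.2 • ξ p.1.1)) →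
        g = g₁ ∨ g = g₂ ∨ g = g₃ ∨ g = g₄ := by
  classical
  refine ⟨(if h : ∃ g, Wpred a b ε c μ id true g then h.choose else fun _ => 0),
    (if h : ∃ g, Wpred a b ε c μ id false g then h.choose else fun _ => 0),
    (if h : ∃ g, Wpred a b ε c μ (fun t => a + b - t) true g then h.choose else fun _ => 0),
    (if h : ∃ g, Wpred a b ε c μ (fun t => a + b - t) false g then h.choose else fun _ => 0),
    ?_⟩
  intro g hg
  obtain ⟨s, hs, α, β, ξ, h1, h2, h3, h4, h5, h6, h7, h8⟩ := hg
  by_cases hsgn : 0 < Real.sin (α a)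
  · have hW : Wpred a b ε c μ s true g :=
      ⟨α, β, ξ, h1, h2, h3, h4, (fun t => by simp only [wfun]; exact h5 t), h6, h7, h8,
        iff_of_true hsgn rfl⟩
    rcases hs with hs | hs
    · subst hs
      left
      have hEx : ∃ g, Wpred a b ε c μ id true g := ⟨g, hW⟩
      rw [dif_pos hEx]
      exact Wpred_unique a b hab c hc harc hκpos μ ε id (Or.inl rfl) true g hEx.choose hW
        hEx.choose_spec
    · subst hs
      right; right; left
      have hEx : ∃ g, Wpred a b ε c μ (fun t => a + b - t) true g := ⟨g, hW⟩
      rw [dif_pos hEx]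
      exact Wpred_unique a b hab c hc harc hκpos μ ε _ (Or.inr rfl) true g hEx.choose hW
        hEx.choose_spec
  · have hW : Wpred a b ε c μ s false g :=
      ⟨α, β, ξ, h1, h2, h3, h4, (fun t => by simp only [wfun]; exact h5 t), h6, h7, h8,
        iff_of_false hsgn (by simp)⟩
    rcases hs with hs | hs
    · subst hs
      right; left
      have hEx : ∃ g, Wpred a b ε c μ id false g := ⟨g, hW⟩
      rw [dif_pos hEx]
      exact Wpred_unique a b hab c hc harc hκpos μ ε id (Or.inl rfl) false g hEx.choose hW
        hEx.choose_spec
    · subst hs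
      right; right; right
      have hEx : ∃ g, Wpred a b ε c μ (fun t => a + b - t) false g := ⟨g, hW⟩
      rw [dif_pos hEx]
      exact Wpred_unique a b hab c hc harc hκpos μ ε _ (Or.inr rfl) false g hEx.choose hW
        hEx.choose_spec
end
end
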